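/- Let α>2 and T,R>0, and let g(x)=‖x‖^{−α} on ℝ²∖{0}. Then ∫_{ℝ²} g(y)/(g((R,0))/T + g(y)) dy = ∫_{ℝ²} 1/(1 + ‖y‖^α/(T R^α)) dy = R² T^{2/α} C(α), where C(α) = (2π²/α)·csc(2π/α). -/

import Mathlib

open MeasureTheory ProbabilityTheory Filter Real
open scoped ProbabilityTheory

local notation "E2" => EuclideanSpace ℝ (Fin 2)

open Set in
private lemma K_integrable' {s : ℝ} (h0 : 0 < s) (h1 : s < 1) :
    IntegrableOn (fun v : ℝ => v ^ (s - 1) / (1 + v)) (Ioi 0) := by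
  have h01 : IntegrableOn (fun v : ℝ => v ^ (s - 1) / (1 + v)) (Ioc 0 1) := by
    have hbase : IntegrableOn (fun v : ℝ => v ^ (s - 1)) (Ioc 0 1) := by
      have := (intervalIntegral.intervalIntegrable_rpow' (a := 0) (b := 1) (r := s - 1)
        (by linarith))
      rwa [intervalIntegrable_iff_integrableOn_Ioc_of_le zero_le_one] at this
    refine hbase.mono' ?_ ?_
    · refine (ContinuousOn.aestronglyMeasurable ?_ measurableSet_Ioc)
      intro v hv
      exact ((continuousAt_rpow_const v (s-1) (Or.inl (ne_of_gt hv.1))).continuousWithinAt.div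
        ((continuous_const.add continuous_id).continuousWithinAt) (by nlinarith [hv.1]))
    · filter_upwards [ae_restrict_mem measurableSet_Ioc] with v hv
      rw [Real.norm_eq_abs, abs_div, abs_of_nonneg (Real.rpow_nonneg hv.1.le _),
        abs_of_pos (by linarith [hv.1] : (0:ℝ) < 1 + v)]
      exact div_le_self (Real.rpow_nonneg hv.1.le _) (by linarith [hv.1])
  have h1i : IntegrableOn (fun v : ℝ => v ^ (s - 1) / (1 + v)) (Ioi 1) := by
    have hbase : IntegrableOn (fun v : ℝ => v ^ (s - 2)) (Ioi 1) :=
      integrableOn_Ioi_rpow_of_lt (by linarith) one_pos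
    refine hbase.mono' ?_ ?_
    · refine (ContinuousOn.aestronglyMeasurable ?_ measurableSet_Ioi)
      intro v hv
      have hv1 : (1:ℝ) < v := hv
      exact ((continuousAt_rpow_const v (s-1) (Or.inl (by linarith : (0:ℝ) < v).ne')).continuousWithinAt.div
        ((continuous_const.add continuous_id).continuousWithinAt) (by nlinarith))
    · filter_upwards [ae_restrict_mem measurableSet_Ioi] with v hv
      have hv1 : (1:ℝ) < v := hv
      have hv0 : (0:ℝ) < v := by linarith
      rw [Real.norm_eq_abs, abs_div, abs_of_nonneg (Real.rpow_nonneg hv0.le _),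
        abs_of_pos (by linarith : (0:ℝ) < 1 + v)]
      calc v ^ (s-1) / (1 + v) ≤ v ^ (s-1) / v := by
            apply div_le_div_of_nonneg_left (Real.rpow_nonneg hv0.le _) hv0 (by linarith)
        _ = v ^ (s-2) := by
            rw [div_eq_mul_inv, ← Real.rpow_neg_one v, ← Real.rpow_add hv0]; ring_nf
  have : Ioi (0:ℝ) = Ioc 0 1 ∪ Ioi 1 := (Ioc_union_Ioi_eq_Ioi zero_le_one).symm
  rw [this]
  exact h01.union h1i

open Set in
private lemma exp_int' {r : ℝ} (hr : 0 < r) :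
    ∫ t in Ioi (0:ℝ), Real.exp (-(r * t)) = 1 / r := by
  have := integral_rpow_mul_exp_neg_mul_Ioi (a := 1) (r := r) one_pos hr
  simpa [Real.Gamma_one] using this

open Set in
private lemma K_eq' {s : ℝ} (h0 : 0 < s) (h1 : s < 1) :
    ∫ v in Ioi (0:ℝ), v ^ (s - 1) / (1 + v) = Real.Gamma s * Real.Gamma (1 - s) := by
  set μ := volume.restrict (Ioi (0:ℝ)) with hμ
  set f : ℝ → ℝ → ℝ := fun v t => v ^ (s - 1) * Real.exp (-((1 + v) * t)) with hf
  have hmeas : Measurable (Function.uncurry f) := by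
    apply Measurable.mul
    · exact (measurable_fst.pow_const _)
    · exact (((measurable_const.add measurable_fst).mul measurable_snd).neg).exp
  have hinner : ∀ v : ℝ, 0 < v → ∫ t, f v t ∂μ = v ^ (s - 1) / (1 + v) := by
    intro v hv
    have h1v : 0 < 1 + v := by linarith
    rw [hμ, integral_const_mul, exp_int' h1v]
    ring
  have hinner_int : ∀ v : ℝ, 0 < v → Integrable (f v) μ := by
    intro v hv
    have h1v : 0 < 1 + v := by linarith
    have : IntegrableOn (fun t : ℝ => Real.exp (-(1 + v) * t)) (Ioi 0) :=
      exp_neg_integrableOn_Ioi 0 h1v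
    have := this.const_mul (v ^ (s - 1))
    refine this.congr (Filter.Eventually.of_forall fun t => ?_)
    simp only [hf, neg_mul]
  have hnonneg : ∀ v t : ℝ, 0 < v → 0 ≤ f v t := fun v t hv => by
    exact mul_nonneg (Real.rpow_nonneg hv.le _) (Real.exp_nonneg _)
  have hInt : Integrable (Function.uncurry f) (μ.prod μ) := by
    rw [integrable_prod_iff hmeas.aestronglyMeasurable]
    constructor
    · filter_upwards [ae_restrict_mem measurableSet_Ioi] with v hv
      exact hinner_int v hv
    · refine (K_integrable' h0 h1).congr ?_
      filter_upwards [ae_restrict_mem measurableSet_Ioi] with v hv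
      rw [← hinner v hv]
      refine integral_congr_ae (Filter.Eventually.of_forall fun t => ?_)
      show f v t = ‖f v t‖
      rw [Real.norm_eq_abs, abs_of_nonneg (hnonneg v t hv)]
  have hswap : ∫ v, ∫ t, f v t ∂μ ∂μ = ∫ t, ∫ v, f v t ∂μ ∂μ :=
    integral_integral_swap hInt
  have hL : ∫ v, ∫ t, f v t ∂μ ∂μ = ∫ v in Ioi (0:ℝ), v ^ (s - 1) / (1 + v) := by
    refine integral_congr_ae ?_
    filter_upwards [ae_restrict_mem measurableSet_Ioi] with v hv
    exact hinner v hv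
  have hR : ∫ t, ∫ v, f v t ∂μ ∂μ = Real.Gamma s * Real.Gamma (1 - s) := by
    have hRinner : ∀ t : ℝ, 0 < t →
        ∫ v, f v t ∂μ = Real.exp (-t) * ((1 / t) ^ s * Real.Gamma s) := by
      intro t ht
      have : ∀ v : ℝ, f v t = Real.exp (-t) * (v ^ (s - 1) * Real.exp (-(t * v))) := by
        intro v
        have he : -((1 + v) * t) = -t + -(t * v) := by ring
        show v ^ (s - 1) * Real.exp (-((1 + v) * t)) = _
        rw [he, Real.exp_add]; ring
      calc ∫ v, f v t ∂μ
          = ∫ v in Ioi (0:ℝ), Real.exp (-t) * (v ^ (s - 1) * Real.exp (-(t * v))) := by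
            rw [hμ]; exact integral_congr_ae (Filter.Eventually.of_forall fun v => this v)
        _ = Real.exp (-t) * ∫ v in Ioi (0:ℝ), v ^ (s - 1) * Real.exp (-(t * v)) := by
            rw [integral_const_mul]
        _ = Real.exp (-t) * ((1 / t) ^ s * Real.Gamma s) := by
            rw [integral_rpow_mul_exp_neg_mul_Ioi h0 ht]
    calc ∫ t, ∫ v, f v t ∂μ ∂μ
        = ∫ t in Ioi (0:ℝ), Real.Gamma s * (t ^ ((1 - s) - 1) * Real.exp (-(1 * t))) := by
          rw [hμ]
          refine integral_congr_ae ?_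
          filter_upwards [ae_restrict_mem measurableSet_Ioi] with t ht
          have ht' : (0:ℝ) < t := ht
          rw [hRinner t ht', one_div, Real.inv_rpow ht'.le, ← Real.rpow_neg ht'.le]
          have h2 : (1:ℝ) - s - 1 = -s := by ring
          rw [h2, one_mul]; ring
      _ = Real.Gamma s * ((1 / 1) ^ (1 - s) * Real.Gamma (1 - s)) := by
          rw [integral_const_mul, integral_rpow_mul_exp_neg_mul_Ioi (by linarith) one_pos]
      _ = Real.Gamma s * Real.Gamma (1 - s) := by norm_num
  rw [← hL, hswap, hR]

open Set in
private lemma J_eq' {α c : ℝ} (hα : 2 < α) (hc : 0 < c) :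
    ∫ y in Ioi (0:ℝ), y * (1 / (1 + y ^ α / c)) =
      α⁻¹ * c ^ (2 / α) * (π / Real.sin (π * (2 / α))) := by
  have hα0 : (0:ℝ) < α := by linarith
  have hs0 : (0:ℝ) < 2 / α := by positivity
  have hs1 : 2 / α < 1 := by rw [div_lt_one hα0]; linarith
  set g : ℝ → ℝ := fun u => α⁻¹ * u ^ (2 / α - 1) * (1 / (1 + u / c)) with hgdef
  have stepA : ∫ y in Ioi (0:ℝ), y * (1 / (1 + y ^ α / c)) = ∫ u in Ioi (0:ℝ), g u := by
    rw [← integral_comp_rpow_Ioi_of_pos (g := g) hα0]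
    refine setIntegral_congr_fun measurableSet_Ioi fun x hx => ?_
    have hx0 : (0:ℝ) < x := hx
    have h1 : (x ^ α) ^ (2 / α - 1) = x ^ (2 - α) := by
      rw [← Real.rpow_mul hx0.le]; congr 1; field_simp
    have h2 : x ^ (α - 1) * x ^ (2 - α) = x := by
      rw [← Real.rpow_add hx0]; norm_num
    have key : α * x ^ (α - 1) * (α⁻¹ * x ^ (2 - α)) = x := by
      rw [show α * x ^ (α - 1) * (α⁻¹ * x ^ (2 - α)) =
        (α * α⁻¹) * (x ^ (α - 1) * x ^ (2 - α)) from by ring,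
        mul_inv_cancel₀ hα0.ne', one_mul, h2]
    simp only [smul_eq_mul, hgdef, h1]
    rw [show α * x ^ (α - 1) * (α⁻¹ * x ^ (2 - α) * (1 / (1 + x ^ α / c))) =
      (α * x ^ (α - 1) * (α⁻¹ * x ^ (2 - α))) * (1 / (1 + x ^ α / c)) from by ring, key]
  have hscale := integral_comp_mul_left_Ioi g 0 hc
  rw [mul_zero] at hscale
  have h4 : ∫ u in Ioi (0:ℝ), g u = c * ∫ x in Ioi (0:ℝ), g (c * x) := by
    rw [hscale, smul_eq_mul, ← mul_assoc, mul_inv_cancel₀ hc.ne', one_mul]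
  have h5 : ∫ x in Ioi (0:ℝ), g (c * x) =
      (α⁻¹ * c ^ (2 / α - 1)) * ∫ v in Ioi (0:ℝ), v ^ (2 / α - 1) / (1 + v) := by
    rw [← integral_const_mul]
    refine setIntegral_congr_fun measurableSet_Ioi fun x hx => ?_
    have hx0 : (0:ℝ) < x := hx
    simp only [hgdef]
    rw [mul_comm c x, mul_div_assoc, div_self hc.ne', mul_one,
      Real.mul_rpow hx0.le hc.le]
    ring
  have hrefl := Real.Gamma_mul_Gamma_one_sub (2 / α)
  rw [stepA, h4, h5, K_eq' hs0 hs1, hrefl, ← mul_assoc]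
  rw [show c * (α⁻¹ * c ^ (2 / α - 1)) = α⁻¹ * (c ^ (1:ℝ) * c ^ (2 / α - 1)) from by
    rw [Real.rpow_one]; ring, ← Real.rpow_add hc]
  norm_num

open Set in
private lemma polar2' (f : ℝ → ℝ) :
    ∫ x : E2, f ‖x‖ = 2 * π * ∫ y in Ioi (0:ℝ), y * f y := by
  rw [integral_fun_norm_addHaar (volume : Measure E2) f]
  have hdim : Module.finrank ℝ E2 = 2 := by simp [finrank_euclideanSpace]
  have hball : ((volume : Measure E2) (Metric.ball 0 1)).toReal = π := by
    rw [EuclideanSpace.volume_ball]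
    have : (1:ℝ) + 1 = 2 := by norm_num
    simp [this, Real.Gamma_two, Real.sq_sqrt Real.pi_pos.le,
      ENNReal.toReal_ofReal Real.pi_pos.le]
  rw [hdim, measureReal_def, hball]
  simp only [smul_eq_mul, nsmul_eq_mul, Nat.cast_ofNat, pow_one]
  norm_num
  ring

/-- Evaluation of `β_I(R)` for the singular path loss `g(x) = ‖x‖^{-α}`:
`∫_{ℝ²} g(y)/(g(R,0)/T + g(y)) dy = ∫_{ℝ²} 1/(1+‖y‖^α/(TR^α)) dy = R² T^(2/α) C(α)`,
where `C(α) = (2π²/α) csc(2π/α)`. -/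
theorem stmt_14
    (α T R : ℝ) (hα : 2 < α) (hT : 0 < T) (hR : 0 < R)
    (g : E2 → ℝ) (hg : ∀ x, g x = ‖x‖ ^ (-α))
    (z : E2) (hz : z = EuclideanSpace.single (0 : Fin 2) R) :
    (∫ y, g y / (g z / T + g y)) = (∫ y : E2, 1 / (1 + ‖y‖ ^ α / (T * R ^ α))) ∧
      (∫ y, g y / (g z / T + g y)) =
        R ^ 2 * T ^ (2 / α) * (2 * π ^ 2 / α / Real.sin (2 * π / α)) := by
  have hα0 : (0:ℝ) < α := by linarith
  set c : ℝ := T * R ^ α with hcdef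
  have hc : 0 < c := by positivity
  have hzn : ‖z‖ = R := by
    rw [hz, EuclideanSpace.norm_single]; exact abs_of_pos hR
  have h1 : (∫ y, g y / (g z / T + g y)) = ∫ y : E2, 1 / (1 + ‖y‖ ^ α / c) := by
    refine integral_congr_ae ?_
    have h0 : (volume : Measure E2) {0} = 0 := measure_singleton 0
    filter_upwards [compl_mem_ae_iff.mpr h0] with y hy
    have hy0 : y ≠ 0 := hy
    have hn : 0 < ‖y‖ := norm_pos_iff.mpr hy0
    rw [hg y, hg z, hzn, Real.rpow_neg hn.le, Real.rpow_neg hR.le]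
    have ha : 0 < ‖y‖ ^ α := Real.rpow_pos_of_pos hn α
    have hb : 0 < R ^ α := Real.rpow_pos_of_pos hR α
    rw [hcdef]
    field_simp
    ring
  have h2 : (∫ y : E2, 1 / (1 + ‖y‖ ^ α / c)) =
      2 * π * ∫ y in Set.Ioi (0:ℝ), y * (1 / (1 + y ^ α / c)) :=
    polar2' (fun r => 1 / (1 + r ^ α / c))
  have h3 := J_eq' hα hc
  have hsin : π * (2 / α) = 2 * π / α := by ring
  have hcval : c ^ (2 / α) = T ^ (2 / α) * R ^ (2:ℕ) := by
    rw [hcdef, Real.mul_rpow hT.le (Real.rpow_pos_of_pos hR α).le,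
      ← Real.rpow_natCast R 2, ← Real.rpow_mul hR.le]
    congr 2
    push_cast
    field_simp
  have hfinal : (∫ y, g y / (g z / T + g y)) =
      R ^ 2 * T ^ (2 / α) * (2 * π ^ 2 / α / Real.sin (2 * π / α)) := by
    rw [h1, h2, h3, hsin, hcval]
    field_simp
  exact ⟨h1, hfinal⟩
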